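/- Under the parallel transport equation Ψ'(s) = [P'(s), P(s)] Ψ(s), the quantity Ψ(s)* P(s) Ψ(s) is constant in s. In particular, if the columns of Ψ(s₀) span the range of P(s₀), then the columns of Ψ(s) span the range of P(s) for all s. -/

import Mathlib

open ContinuousLinearMap

section AuxPTP

variable {E F G : Type*} [NormedAddCommGroup E] [NormedSpace ℂ E]
  [NormedAddCommGroup F] [NormedSpace ℂ F] [NormedAddCommGroup G] [NormedSpace ℂ G]

/-- Composition of `ℂ`-linear maps as a real-bilinear map. -/
noncomputable def compR : (F →L[ℂ] G) →L[ℝ] (E →L[ℂ] F) →L[ℝ] (E →L[ℂ] G) :=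
  (ContinuousLinearMap.restrictScalarsL ℂ (E →L[ℂ] F) (E →L[ℂ] G) ℝ ℝ).comp
    ((ContinuousLinearMap.compL ℂ E F G).restrictScalars ℝ)

lemma compR_apply (u : F →L[ℂ] G) (v : E →L[ℂ] F) : compR u v = u ∘L v := rfl

lemma HasDerivAt.clm_compR {c : ℝ → (F →L[ℂ] G)} {d : ℝ → (E →L[ℂ] F)}
    {c' : F →L[ℂ] G} {d' : E →L[ℂ] F} {x : ℝ}
    (hc : HasDerivAt c c' x) (hd : HasDerivAt d d' x) :
    HasDerivAt (fun t => c t ∘L d t) (c' ∘L d x + c x ∘L d') x := by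
  have := ContinuousLinearMap.hasDerivAt_of_bilinear (B := compR (E := E)) (fun _ => hc) (fun _ => hd)
  simpa only [compR_apply, add_comm] using this

variable {E' F' : Type*} [NormedAddCommGroup E'] [InnerProductSpace ℂ E'] [CompleteSpace E']
  [NormedAddCommGroup F'] [InnerProductSpace ℂ F'] [CompleteSpace F']

/-- The adjoint as a real-continuous-linear map, to differentiate through it. -/
noncomputable def adjR : (E' →L[ℂ] F') →L[ℝ] (F' →L[ℂ] E') :=
  LinearMap.mkContinuous
    { toFun := ContinuousLinearMap.adjoint
      map_add' := fun A B => by simp [map_add]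
      map_smul' := fun r A => by
        have : (r : ℂ) • A = r • A := by simp
        show ContinuousLinearMap.adjoint (r • A) = r • ContinuousLinearMap.adjoint A
        rw [← this, LinearIsometryEquiv.map_smulₛₗ]
        simp }
    1 (fun A => by simp [LinearIsometryEquiv.norm_map])

lemma HasDerivAt.adjointCLM {f : ℝ → (E' →L[ℂ] F')} {f' : E' →L[ℂ] F'} {s : ℝ}
    (h : HasDerivAt f f' s) :
    HasDerivAt (fun t => ContinuousLinearMap.adjoint (f t))
      (ContinuousLinearMap.adjoint f') s :=
  (adjR.hasFDerivAt.comp_hasDerivAt s h :)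

/-- Algebraic identity: if `p` is idempotent and `q*p + p*q = q` then `p*q*p = 0`. -/
lemma ring_pqp {R : Type*} [Ring R] {p q : R} (hp : p * p = p)
    (hq : q * p + p * q = q) : p * q * p = 0 := by
  have h := congrArg (p * ·) hq
  simp only [mul_add, ← mul_assoc] at h
  rw [hp] at h
  exact add_right_cancel (h.trans (zero_add (p * q)).symm)

/-- If `p*p = p` and `q*p + p*q = q` then `(q*p - p*q)*p - p*(q*p - p*q) = q`. -/
lemma ring_comm_ptp {R : Type*} [Ring R] {p q : R} (hp : p * p = p)
    (hq : q * p + p * q = q) : (q * p - p * q) * p - p * (q * p - p * q) = q := by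
  have h1 : p * q * p = 0 := ring_pqp hp hq
  have h2 : q * p * p = q * p := by rw [mul_assoc, hp]
  have h3 : p * p * q = p * q := by rw [hp]
  simp only [sub_mul, mul_sub, ← mul_assoc, h1, h2, h3, sub_zero, zero_sub, sub_neg_eq_add]
  exact hq

end AuxPTP

set_option maxHeartbeats 2000000 in
theorem parallel_transport_preserves_spanning
    {H : Type*} [NormedAddCommGroup H] [InnerProductSpace ℂ H] [CompleteSpace H]
    {n : ℕ} (P P' : ℝ → (H →L[ℂ] H)) (Ψ : ℝ → (EuclideanSpace ℂ (Fin n) →L[ℂ] H))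
    (hPC1 : ContDiff ℝ 1 P) (hP' : ∀ s, HasDerivAt P (P' s) s)
    (hproj : ∀ s, (P s) ∘L (P s) = P s)
    (hsa : ∀ s, ContinuousLinearMap.adjoint (P s) = P s)
    (hΨ : ∀ s, HasDerivAt Ψ (((P' s ∘L P s) - (P s ∘L P' s)) ∘L Ψ s) s)
    (s₀ : ℝ)
    (hON : (ContinuousLinearMap.adjoint (Ψ s₀)) ∘L Ψ s₀ = ContinuousLinearMap.id ℂ _)
    (hframe : Ψ s₀ ∘L (ContinuousLinearMap.adjoint (Ψ s₀)) = P s₀) :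
    (∀ s, (ContinuousLinearMap.adjoint (Ψ s)) ∘L (P s) ∘L Ψ s
        = (ContinuousLinearMap.adjoint (Ψ s₀)) ∘L (P s₀) ∘L Ψ s₀) ∧
    (∀ s, LinearMap.range (Ψ s : EuclideanSpace ℂ (Fin n) →ₗ[ℂ] H) = LinearMap.range (P s : H →ₗ[ℂ] H)) := by
  classical
  set A : ℝ → (H →L[ℂ] H) := fun s => P' s ∘L P s - P s ∘L P' s with hA
  -- P' is self-adjoint
  have hP'sa : ∀ s, ContinuousLinearMap.adjoint (P' s) = P' s := by
    intro s
    have h1 : (fun t => ContinuousLinearMap.adjoint (P t)) = P := funext hsa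
    have h2 := (hP' s).adjointCLM
    rw [h1] at h2
    exact h2.unique (hP' s)
  -- Leibniz on P∘P = P
  have hPP' : ∀ s, P' s ∘L P s + P s ∘L P' s = P' s := by
    intro s
    have h2 := (hP' s).clm_compR (hP' s)
    have h1 : (fun t => P t ∘L P t) = P := funext hproj
    rw [h1] at h2
    exact h2.unique (hP' s)
  -- adjoint of A is -A
  have hAadj : ∀ s, ContinuousLinearMap.adjoint (A s) = -(A s) := by
    intro s
    simp only [hA, map_sub, adjoint_comp, hsa, hP'sa, neg_sub]
  -- derivative of Ψ in terms of A
  have hΨd : ∀ s, HasDerivAt Ψ (A s ∘L Ψ s) s := fun s => by simpa [hA] using hΨ s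
  have hΨad : ∀ s, HasDerivAt (fun t => ContinuousLinearMap.adjoint (Ψ t))
      (ContinuousLinearMap.adjoint (A s ∘L Ψ s)) s := fun s => (hΨd s).adjointCLM
  -- Ψ† ∘ Ψ is constant, equal to the identity
  have hONs : ∀ s, ContinuousLinearMap.adjoint (Ψ s) ∘L Ψ s = ContinuousLinearMap.id ℂ _ := by
    have hG : ∀ s, HasDerivAt (fun t => ContinuousLinearMap.adjoint (Ψ t) ∘L Ψ t)
        (0 : EuclideanSpace ℂ (Fin n) →L[ℂ] EuclideanSpace ℂ (Fin n)) s := by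
      intro s
      have h := (hΨad s).clm_compR (hΨd s)
      have he : ContinuousLinearMap.adjoint (A s ∘L Ψ s) ∘L Ψ s
          + ContinuousLinearMap.adjoint (Ψ s) ∘L (A s ∘L Ψ s) = 0 := by
        rw [adjoint_comp, hAadj]
        simp [comp_assoc]
      rwa [he] at h
    intro s
    have hconst := is_const_of_deriv_eq_zero
      (f := fun t => ContinuousLinearMap.adjoint (Ψ t) ∘L Ψ t)
      (fun t => (hG t).differentiableAt) (fun t => (hG t).deriv) s s₀
    rw [hconst, hON]
  -- continuity of A
  have hPcont : Continuous P := hPC1.continuous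
  have hP'eq : P' = deriv P := funext fun s => (hP' s).deriv.symm
  have hP'cont : Continuous P' := hP'eq ▸ (hPC1.continuous_deriv le_rfl)
  have hAcont : Continuous A := by
    simp only [hA]
    exact (hP'cont.clm_comp hPcont).sub (hPcont.clm_comp hP'cont)
  -- Φ = Ψ ∘ Ψ† equals P, by uniqueness of ODE solutions
  set Φ : ℝ → (H →L[ℂ] H) := fun s => Ψ s ∘L ContinuousLinearMap.adjoint (Ψ s) with hΦ
  have hΦd : ∀ s, HasDerivAt Φ (A s ∘L Φ s - Φ s ∘L A s) s := by
    intro s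
    have h := (hΨd s).clm_compR (hΨad s)
    have he : (A s ∘L Ψ s) ∘L ContinuousLinearMap.adjoint (Ψ s)
        + Ψ s ∘L ContinuousLinearMap.adjoint (A s ∘L Ψ s)
        = A s ∘L Φ s - Φ s ∘L A s := by
      rw [adjoint_comp, hAadj]
      simp only [hΦ, comp_assoc, comp_neg]
      abel
    rwa [he] at h
  have hPd : ∀ s, HasDerivAt P (A s ∘L P s - P s ∘L A s) s := by
    intro s
    have hkey := ring_comm_ptp (p := P s) (q := P' s)
      ((ContinuousLinearMap.mul_def _ _).trans (hproj s))
      (by rw [ContinuousLinearMap.mul_def, ContinuousLinearMap.mul_def]; exact hPP' s)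
    simp only [ContinuousLinearMap.mul_def] at hkey
    have : A s ∘L P s - P s ∘L A s = P' s := by rw [hA]; exact hkey
    rw [this]; exact hP' s
  -- the difference D := Φ - P solves D' = A D - D A with D s₀ = 0, hence D = 0
  have hDzero : ∀ s, Φ s = P s := by
    intro s
    set D : ℝ → (H →L[ℂ] H) := fun t => Φ t - P t with hD
    have hDd : ∀ t, HasDerivAt D (A t ∘L D t - D t ∘L A t) t := by
      intro t
      have h := (hΦd t).sub (hPd t)
      have he : (A t ∘L Φ t - Φ t ∘L A t) - (A t ∘L P t - P t ∘L A t)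
          = A t ∘L D t - D t ∘L A t := by
        simp only [hD, comp_sub, sub_comp]; abel
      rwa [he] at h
    set a : ℝ := min s₀ s - 1 with ha
    set b : ℝ := max s₀ s + 1 with hb
    have has₀ : s₀ ∈ Set.Ioo a b := by
      constructor
      · have := min_le_left s₀ s; simp only [ha]; linarith
      · have := le_max_left s₀ s; simp only [hb]; linarith
    have hsmem : s ∈ Set.Icc a b := by
      constructor
      · have := min_le_right s₀ s; simp only [ha]; linarith
      · have := le_max_right s₀ s; simp only [hb]; linarith
    have hab : a ≤ b := le_of_lt (lt_trans has₀.1 has₀.2)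
    obtain ⟨C, hC⟩ := (isCompact_Icc (a := a) (b := b)).exists_bound_of_continuousOn
      hAcont.continuousOn
    set M : ℝ := max C 0 with hM
    have hMnn : 0 ≤ M := le_max_right _ _
    set c : ℝ → ℝ := fun t => max a (min b t) with hc
    have hcmem : ∀ t, c t ∈ Set.Icc a b :=
      fun t => ⟨le_max_left _ _, max_le hab (min_le_left _ _)⟩
    have hceq : ∀ t ∈ Set.Ioo a b, c t = t := by
      intro t ht
      simp only [hc]
      rw [min_eq_right (le_of_lt ht.2), max_eq_right (le_of_lt ht.1)]
    set B : ℝ → (H →L[ℂ] H) := fun t => A (c t) with hB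
    have hBle : ∀ t, ‖B t‖ ≤ M := fun t => le_trans (hC _ (hcmem t)) (le_max_left _ _)
    set v : ℝ → (H →L[ℂ] H) → (H →L[ℂ] H) := fun t X => B t ∘L X - X ∘L B t with hv
    set K : NNReal := Real.toNNReal (2 * M) with hK
    have hKco : (K : ℝ) = 2 * M := Real.coe_toNNReal _ (by linarith)
    have hlip : ∀ t, LipschitzOnWith K (v t) Set.univ := by
      intro t
      apply LipschitzWith.lipschitzOnWith
      apply LipschitzWith.of_dist_le_mul
      intro X Y
      rw [dist_eq_norm, dist_eq_norm, hKco]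
      have he : v t X - v t Y = B t ∘L (X - Y) - (X - Y) ∘L B t := by
        simp only [hv, comp_sub, sub_comp]; abel
      rw [he]
      calc ‖B t ∘L (X - Y) - (X - Y) ∘L B t‖
          ≤ ‖B t ∘L (X - Y)‖ + ‖(X - Y) ∘L B t‖ := norm_sub_le _ _
        _ ≤ ‖B t‖ * ‖X - Y‖ + ‖X - Y‖ * ‖B t‖ := by
            gcongr <;> exact opNorm_comp_le _ _
        _ ≤ 2 * M * ‖X - Y‖ := by nlinarith [hBle t, norm_nonneg (X - Y)]
    have hEq := ODE_solution_unique_of_mem_Icc (v := v) (s := fun _ => Set.univ)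
      (K := K) (fun t _ => hlip t) has₀
      (f := D) (fun t _ => ((hDd t).continuousAt).continuousWithinAt)
      (fun t ht => by
        have he : v t (D t) = A t ∘L D t - D t ∘L A t := by
          simp only [hv, hB, hceq t ht]
        rw [he]; exact hDd t)
      (fun _ _ => trivial)
      (g := fun _ => 0) (continuousOn_const)
      (fun t ht => by
        have he : v t (0 : H →L[ℂ] H) = 0 := by simp [hv]
        rw [he]; exact hasDerivAt_const t 0)
      (fun _ _ => trivial)
      (by simp only [hD]; rw [hΦ]; simp [hframe])
    have := hEq hsmem
    simpa [hD, sub_eq_zero] using this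
  -- conclude
  have hPΨ : ∀ s, P s ∘L Ψ s = Ψ s := by
    intro s
    rw [← hDzero s, hΦ, comp_assoc, hONs s]
    exact comp_id _
  constructor
  · intro s
    rw [hPΨ s, hPΨ s₀, hONs s, hONs s₀]
  · intro s
    apply le_antisymm
    · intro x hx
      obtain ⟨y, rfl⟩ := LinearMap.mem_range.mp hx
      refine LinearMap.mem_range.mpr ⟨Ψ s y, ?_⟩
      calc P s (Ψ s y) = (P s ∘L Ψ s) y := rfl
        _ = Ψ s y := by rw [hPΨ s]
    · intro x hx
      obtain ⟨z, rfl⟩ := LinearMap.mem_range.mp hx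
      refine LinearMap.mem_range.mpr ⟨ContinuousLinearMap.adjoint (Ψ s) z, ?_⟩
      calc Ψ s (ContinuousLinearMap.adjoint (Ψ s) z) = Φ s z := rfl
        _ = P s z := by rw [hDzero s]
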